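/- Let q be a prime power, F = F_{q^2}, and consider the group U = U_2^{2,q}(F) = {1 + aτ + bτ² : a, b ∈ F} with multiplication (1+aτ+bτ²)(1+cτ+dτ²) = 1 + (a+c)τ + (b + d + a c^q)τ². Let ψ : F → ℂ× be an additive character with trivial Gal(F/F_q)-stabilizer, let A = {1 + aτ + bτ² : a ∈ F_q} ≤ U, and let ψ̃ : A → ℂ× be any character with ψ̃(1 + bτ²) = ψ(b). Then Ind_A^U(ψ̃) is an irreducible representation of U of dimension q. -/

import Mathlib

section Aux
variable {F : Type} [Field F] {q : ℕ}

/-- The subgroup of elements fixed by `x ↦ x^q`. -/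
def fixK (F : Type) [Field F] (q : ℕ) (h0 : (0:F)^q = 0)
    (hadd : ∀ x y : F, (x+y)^q = x^q + y^q) : AddSubgroup F where
  carrier := {a | a^q = a}
  zero_mem' := h0
  add_mem' := fun {a b} ha hb => by
    simp only [Set.mem_setOf_eq] at *; rw [hadd, ha, hb]
  neg_mem' := fun {a} ha => by
    simp only [Set.mem_setOf_eq] at *
    have h := hadd a (-a)
    rw [add_neg_cancel, h0, ha] at h
    exact eq_neg_of_add_eq_zero_right h.symm

lemma card_root_le [Fintype F] (hq2 : 2 ≤ q) (c : F) :
    Nat.card {x : F // x^q = c * x} ≤ q := by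
  classical
  set P : Polynomial F := Polynomial.X ^ q - Polynomial.C c * Polynomial.X with hP
  have hP0 : P ≠ 0 := by
    intro h
    have h2 := congrArg (fun Q => Polynomial.coeff Q q) h
    simp only [hP, Polynomial.coeff_sub, Polynomial.coeff_X_pow, if_pos rfl,
      Polynomial.coeff_C_mul, Polynomial.coeff_X, Polynomial.coeff_zero] at h2
    rw [if_neg (show ¬(1 = q) by omega), mul_zero, sub_zero] at h2
    exact one_ne_zero h2
  have hdeg : P.natDegree ≤ q := by
    refine le_trans (Polynomial.natDegree_sub_le _ _) ?_
    simp only [max_le_iff, Polynomial.natDegree_X_pow, le_refl, true_and]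
    exact le_trans (Polynomial.natDegree_C_mul_le _ _) (by rw [Polynomial.natDegree_X]; omega)
  have hcard : Nat.card {x : F // x^q = c * x}
      = (Finset.univ.filter (fun x : F => x^q = c*x)).card := by
    rw [Nat.card_eq_fintype_card, Fintype.card_subtype]
  rw [hcard]
  have hsub : (Finset.univ.filter (fun x : F => x^q = c*x)) ⊆ P.roots.toFinset := by
    intro x hx
    simp only [Finset.mem_filter, Finset.mem_univ, true_and] at hx
    rw [Multiset.mem_toFinset, Polynomial.mem_roots hP0]
    simp [hP, Polynomial.IsRoot, sub_eq_zero, hx]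
  calc (Finset.univ.filter (fun x : F => x^q = c*x)).card
      ≤ P.roots.toFinset.card := Finset.card_le_card hsub
    _ ≤ Multiset.card P.roots := Multiset.toFinset_card_le _
    _ ≤ P.natDegree := Polynomial.card_roots' P
    _ ≤ q := hdeg

end Aux

section Aux2
variable {F : Type} [Field F] {q : ℕ}

lemma fixK_card [Fintype F] (hF : Fintype.card F = q^2) (hq2 : 2 ≤ q)
    (h0 : (0:F)^q = 0) (hadd : ∀ x y : F, (x+y)^q = x^q + y^q)
    (hx2 : ∀ x : F, (x^q)^q = x) :
    Nat.card ↥(fixK F q h0 hadd) = q := by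
  classical
  set L : F →+ F := AddMonoidHom.mk' (fun x => x^q - x) (by
    intro a b; simp only [hadd]; ring) with hL
  have hs : ∀ u v : F, (u - v)^q = u^q - v^q := by
    intro u v
    have h := hadd (u - v) v
    rw [sub_add_cancel] at h
    exact eq_sub_of_add_eq h.symm
  have hker : L.ker = fixK F q h0 hadd := by
    ext x
    show x^q - x = 0 ↔ x ∈ {a : F | a^q = a}
    rw [Set.mem_setOf_eq, sub_eq_zero]
  have hprop : ∀ y : F, y ∈ L.range → y^q = (-1) * y := by
    rintro y ⟨x, rfl⟩
    show (x^q - x)^q = (-1) * (x^q - x)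
    rw [hs, hx2]; ring
  have hrle : Nat.card ↥L.range ≤ q := by
    refine le_trans (Nat.card_le_card_of_injective
      (fun y : L.range => (⟨y.1, hprop y.1 y.2⟩ : {x : F // x^q = (-1)*x})) ?_)
      (card_root_le hq2 _)
    intro a b hab
    exact Subtype.ext (congrArg Subtype.val hab :)
  have hkle : Nat.card ↥(fixK F q h0 hadd) ≤ q := by
    refine le_trans (Nat.card_le_card_of_injective
      (fun y : fixK F q h0 hadd => (⟨y.1, by rw [one_mul]; exact y.2⟩ : {x : F // x^q = 1*x})) ?_)
      (card_root_le hq2 1)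
    intro a b hab
    exact Subtype.ext (congrArg Subtype.val hab :)
  have hsplit := AddSubgroup.card_eq_card_quotient_mul_card_addSubgroup L.ker
  have hquot : Nat.card (F ⧸ L.ker) = Nat.card ↥L.range :=
    Nat.card_congr (QuotientAddGroup.quotientKerEquivRange L).toEquiv
  rw [hquot, hker] at hsplit
  have hcF : Nat.card F = q^2 := by rw [Nat.card_eq_fintype_card, hF]
  rw [hcF] at hsplit
  set k := Nat.card ↥(fixK F q h0 hadd)
  set r := Nat.card ↥L.range
  have h1 : r * k ≤ q * k := Nat.mul_le_mul_right k hrle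
  have h2 : q * k ≤ q * q := Nat.mul_le_mul_left q hkle
  have h3 : q * q = q^2 := (sq q).symm
  have h4 : q * k = q * q := by omega
  exact (Nat.eq_of_mul_eq_mul_left (by omega) h4)

end Aux2

noncomputable def auxG (q : ℕ) {F : Type} [Field F] (ψt : F → F → ℂ) {Q : Type}
    (σ : Q → F) (π : F → Q) (v : Q → ℂ) : F × F → ℂ :=
  fun x => ψt (x.1 - σ (π x.1)) (x.2 - (x.1 - σ (π x.1)) * (σ (π x.1))^q) * v (π x.1)

noncomputable def indSubspaceU2 (q : ℕ) (F : Type) [Field F] (ψt : F → F → ℂ) :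
    Submodule ℂ (F × F → ℂ) :=
  ⨅ (a : {a : F // a ^ q = a}) (b : F) (x : F × F),
    LinearMap.ker
      ((LinearMap.proj (R := ℂ) (φ := fun _ : F × F => ℂ)
          ((a : F) + x.1, b + x.2 + (a : F) * x.1 ^ q))
        - ψt (a : F) b • LinearMap.proj (R := ℂ) (φ := fun _ : F × F => ℂ) x)

theorem stmt_14 (p m q : ℕ) (hp : p.Prime) (hm : 0 < m) (hq : q = p ^ m)
    (F : Type) [Field F] [Fintype F] [CharP F p] (hF : Fintype.card F = q ^ 2)
    (ψ : AddChar F ℂ) (hψ : ∃ x : F, ψ (x ^ q) ≠ ψ x)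
    (ψt : F → F → ℂ)
    (hmul : ∀ a c : F, a ^ q = a → c ^ q = c → ∀ b d : F,
      ψt (a + c) (b + d + a * c ^ q) = ψt a b * ψt c d)
    (hres : ∀ b : F, ψt 0 b = ψ b) :
    Module.finrank ℂ ↥(indSubspaceU2 q F ψt) = q ∧
    ∀ W : Submodule ℂ (F × F → ℂ), W ≤ indSubspaceU2 q F ψt →
      (∀ f ∈ W, ∀ g : F × F,
        (fun x : F × F => f (x.1 + g.1, x.2 + g.2 + x.1 * g.1 ^ q)) ∈ W) →
      W = ⊥ ∨ W = indSubspaceU2 q F ψt := by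
  classical
  haveI : Fact p.Prime := ⟨hp⟩
  have hq2 : 2 ≤ q := by
    rw [hq]; calc 2 = 2^1 := rfl
    _ ≤ p^m := Nat.pow_le_pow_left hp.two_le m |>.trans' (by
        exact Nat.pow_le_pow_right (by omega) hm)
  have hq0 : q ≠ 0 := by omega
  have hfr : ∀ x y : F, (x + y)^q = x^q + y^q := by
    intro x y; rw [hq]; exact add_pow_char_pow x y p m
  have h0q : (0:F)^q = 0 := zero_pow hq0
  have hsubq : ∀ x y : F, (x - y)^q = x^q - y^q := by
    intro x y
    have h := hfr (x - y) y
    rw [sub_add_cancel] at h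
    exact eq_sub_of_add_eq h.symm
  have hx2 : ∀ x : F, (x^q)^q = x := by
    intro x
    rw [← pow_mul, ← sq, ← hF]
    exact FiniteField.pow_card x
  set K : AddSubgroup F := fixK F q h0q hfr with hKdef
  have hKmem : ∀ y : F, y ∈ K ↔ y^q = y := fun y => Iff.rfl
  have hKcard : Nat.card ↥K = q := fixK_card hF hq2 h0q hfr hx2
  -- character basics
  have hψne : ∀ z : F, ψ z ≠ 0 := by
    intro z h
    have h1 : ψ z * ψ (-z) = 1 := by
      rw [← AddChar.map_add_eq_mul, add_neg_cancel, AddChar.map_zero_eq_one]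
    rw [h, zero_mul] at h1
    exact zero_ne_one h1
  -- ψt rules
  have r1 : ∀ a : F, a^q = a → ∀ b d : F, ψt a (b + d) = ψt a b * ψ d := by
    intro a ha b d
    have h := hmul a 0 ha h0q b d
    rw [add_zero, h0q, mul_zero, add_zero, hres] at h
    exact h
  have r2 : ∀ a : F, a^q = a → ∀ b : F, ψt a b ≠ 0 := by
    intro a ha b h
    have hna : (-a)^q = -a := by
      have h2 := hsubq 0 a
      rw [zero_sub, h0q, zero_sub, ha] at h2
      exact h2
    have h1 := hmul a (-a) ha hna b 0
    rw [add_neg_cancel, hres, h, zero_mul] at h1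
    exact hψne _ h1
  -- membership characterization
  have hmemV : ∀ f : F × F → ℂ, f ∈ indSubspaceU2 q F ψt ↔
      ∀ a : F, a^q = a → ∀ b : F, ∀ x : F × F,
        f (a + x.1, b + x.2 + a * x.1^q) = ψt a b * f x := by
    intro f
    simp only [indSubspaceU2, Submodule.mem_iInf, LinearMap.mem_ker, LinearMap.sub_apply,
      LinearMap.proj_apply, LinearMap.smul_apply, smul_eq_mul, sub_eq_zero, Subtype.forall]
  -- quotient setup
  set Q := F ⧸ K with hQdef
  letI : Fintype Q := Fintype.ofFinite Q
  have hQcard : Nat.card Q = q := by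
    have h1 : Nat.card F = Nat.card Q * Nat.card ↥K :=
      AddSubgroup.card_eq_card_quotient_mul_card_addSubgroup K
    rw [hKcard, Nat.card_eq_fintype_card, hF] at h1
    have h2 : q * q = Nat.card Q * q := by rw [← h1, sq]
    exact (Nat.eq_of_mul_eq_mul_right (by omega) h2.symm)
  set π : F → Q := QuotientAddGroup.mk with hπdef
  set σ : Q → F := fun t => t.out with hσdef
  have hσ : ∀ t : Q, π (σ t) = t := fun t => QuotientAddGroup.out_eq' t
  have hπeq : ∀ x y : F, x - y ∈ K → π x = π y := by
    intro x y h
    apply (QuotientAddGroup.eq).mpr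
    have h2 := K.neg_mem h
    rwa [neg_sub, sub_eq_neg_add] at h2
  have hπmem : ∀ x : F, x - σ (π x) ∈ K := by
    intro x
    have h : π (σ (π x)) = π x := hσ _
    have h2 := (QuotientAddGroup.eq).mp h
    rwa [← sub_eq_neg_add] at h2
  set E : (F × F → ℂ) → (Q → ℂ) := fun f t => f (σ t, 0) with hEdef
  set G : (Q → ℂ) → (F × F → ℂ) := auxG q ψt σ π with hGdef
  have hGmem : ∀ v, G v ∈ indSubspaceU2 q F ψt := by
    intro v
    rw [hmemV]
    intro a ha b x
    have hx1 : x.1 - σ (π x.1) ∈ K := hπmem x.1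
    have hπa : π (a + x.1) = π x.1 := by
      apply hπeq
      rw [add_sub_cancel_right]
      exact (hKmem a).mpr ha
    show ψt ((a+x.1) - σ (π (a+x.1)))
        ((b + x.2 + a*x.1^q) - ((a+x.1) - σ (π (a+x.1))) * (σ (π (a+x.1)))^q) * v (π (a+x.1))
      = ψt a b * (ψt (x.1 - σ (π x.1)) (x.2 - (x.1 - σ (π x.1)) * (σ (π x.1))^q) * v (π x.1))
    rw [hπa]
    set t := σ (π x.1) with htdef
    have hxtk : (x.1 - t)^q = x.1 - t := (hKmem _).mp hx1
    have e1 : x.1^q - t^q = x.1 - t := by rw [← hsubq, hxtk]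
    have key := hmul a (x.1 - t) ha hxtk b (x.2 - (x.1 - t)*t^q)
    have harg1 : a + x.1 - t = a + (x.1 - t) := by ring
    have harg2 : b + x.2 + a*x.1^q - (a + x.1 - t)*t^q
        = b + (x.2 - (x.1 - t)*t^q) + a * (x.1 - t)^q := by
      rw [hxtk]
      linear_combination a * e1
    rw [harg2, harg1, key]
    ring
  have hGE : ∀ f, f ∈ indSubspaceU2 q F ψt → G (E f) = f := by
    intro f hf
    rw [hmemV] at hf
    funext x
    obtain ⟨x1, x2⟩ := x
    have hx1 : x1 - σ (π x1) ∈ K := hπmem x1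
    set t := σ (π x1) with htdef
    have key := hf (x1 - t) ((hKmem _).mp hx1) (x2 - (x1 - t)*t^q) (t, 0)
    have h1 : (x1 - t) + t = x1 := by ring
    have h2 : (x2 - (x1 - t)*t^q) + 0 + (x1 - t)*t^q = x2 := by ring
    simp only [h1, h2] at key
    show ψt (x1 - t) (x2 - (x1 - t)*t^q) * (E f) (π x1) = f (x1, x2)
    rw [hEdef]
    exact key.symm
  have hEG : ∀ v, E (G v) = v := by
    intro v
    funext t
    show G v (σ t, 0) = v t
    rw [hGdef]
    show ψt (σ t - σ (π (σ t))) (0 - (σ t - σ (π (σ t))) * (σ (π (σ t)))^q) * v (π (σ t)) = v t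
    rw [hσ t, sub_self, zero_mul, sub_zero, hres, AddChar.map_zero_eq_one, one_mul]
  have hrank : Module.finrank ℂ ↥(indSubspaceU2 q F ψt) = q := by
    let eqv : ↥(indSubspaceU2 q F ψt) ≃ₗ[ℂ] (Q → ℂ) :=
      { toFun := fun f => E f.1
        map_add' := by intro f g; funext t; simp [hEdef]
        map_smul' := by intro c f; funext t; simp [hEdef]
        invFun := fun v => ⟨G v, hGmem v⟩
        left_inv := fun f => Subtype.ext (hGE f.1 f.2)
        right_inv := hEG }
    rw [eqv.finrank_eq, Module.finrank_pi, ← Nat.card_eq_fintype_card, hQcard]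
  letI : Fintype ↥K := Fintype.ofFinite _
  have hKc : Fintype.card ↥K = q := by rw [← Nat.card_eq_fintype_card, hKcard]
  have lemC : ∀ z : F, z ≠ 0 → z^q = -z → ∃ c : F, c^q = c ∧ ψ (c * z) ≠ 1 := by
    intro z hz0 hzq
    obtain ⟨x, hx⟩ := hψ
    have hy0 : (x^q - x)^q = -(x^q - x) := by rw [hsubq, hx2]; ring
    letI : Fintype {y : F // y^q = -y} := Fintype.ofFinite _
    have hSle : Fintype.card {y : F // y^q = -y} ≤ q := by
      have hb := card_root_le (F := F) hq2 (-1)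
      rw [Nat.card_eq_fintype_card] at hb
      refine le_trans (Fintype.card_le_of_injective
        (fun y : {y : F // y^q = -y} =>
          (⟨y.1, by rw [neg_one_mul]; exact y.2⟩ : {x : F // x^q = (-1)*x})) ?_) hb
      intro a b hab
      exact Subtype.ext (congrArg Subtype.val hab :)
    set μ : ↥K → {y : F // y^q = -y} :=
      fun c => ⟨c.1 * z, by rw [mul_pow, (hKmem c.1).mp c.2, hzq]; ring⟩ with hμ
    have hinj : Function.Injective μ := by
      intro a b hab
      have h2 := congrArg Subtype.val hab
      exact Subtype.ext (mul_right_cancel₀ hz0 h2)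
    have hbij : Function.Bijective μ := by
      rw [Fintype.bijective_iff_injective_and_card]
      refine ⟨hinj, ?_⟩
      have hcle : Fintype.card ↥K ≤ Fintype.card {y : F // y^q = -y} :=
        Fintype.card_le_of_injective μ hinj
      omega
    obtain ⟨c, hc⟩ := hbij.2 ⟨x^q - x, hy0⟩
    refine ⟨c.1, (hKmem c.1).mp c.2, ?_⟩
    have hcz : c.1 * z = x^q - x := congrArg Subtype.val hc
    rw [hcz]
    intro h1
    apply hx
    have h2 : ψ (x^q) = ψ (x^q - x) * ψ x := by
      rw [← AddChar.map_add_eq_mul, sub_add_cancel]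
    rw [h2, h1, one_mul]
  have charSum : ∀ z : F, z ≠ 0 → z^q = -z → (∑ a : ↥K, ψ (a.1 * z)) = 0 := by
    intro z hz0 hzq
    obtain ⟨c, hc, hcne⟩ := lemC z hz0 hzq
    set c' : ↥K := ⟨c, (hKmem c).mpr hc⟩ with hc'
    have hre : ∑ a : ↥K, ψ ((c' + a).1 * z) = ∑ a : ↥K, ψ (a.1 * z) :=
      Fintype.sum_equiv (Equiv.addLeft c') _ _ (fun a => rfl)
    have hexp : ∀ a : ↥K, ψ ((c' + a).1 * z) = ψ (c * z) * ψ (a.1 * z) := by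
      intro a
      have : (c' + a).1 = c + a.1 := rfl
      rw [this, add_mul, AddChar.map_add_eq_mul]
    rw [Finset.sum_congr rfl (fun a _ => hexp a), ← Finset.mul_sum] at hre
    have hz : (ψ (c * z) - 1) * (∑ a : ↥K, ψ (a.1 * z)) = 0 := by
      linear_combination hre
    rcases mul_eq_zero.mp hz with h | h
    · exact absurd (by linear_combination h) hcne
    · exact h
  refine ⟨hrank, ?_⟩
  intro W hWle hWinv
  by_cases hbot : W = ⊥
  · exact Or.inl hbot
  right
  obtain ⟨f, hfW, hfne⟩ := (Submodule.ne_bot_iff W).mp hbot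
  have hfV := hWle hfW
  obtain ⟨x₀, hx₀⟩ : ∃ x, f x ≠ 0 := by
    by_contra hcon
    push_neg at hcon
    exact hfne (funext hcon)
  set t₀ := π x₀.1 with ht₀
  have hc₀ : f (σ t₀, 0) ≠ 0 := by
    intro h
    apply hx₀
    conv_lhs => rw [← hGE f hfV]
    show ψt _ _ * f (σ (π x₀.1), 0) = 0
    rw [← ht₀, h, mul_zero]
  set w : Q → F := fun t => σ t - (σ t)^q with hwdef
  set h1 : F × F → ℂ := ∑ a : ↥K, (ψt a.1 (a.1 * w t₀))⁻¹ •
      (fun x : F × F => f (x.1 + a.1, x.2 + 0 + x.1 * a.1^q)) with hh1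
  have hh1W : h1 ∈ W := by
    apply Submodule.sum_mem
    intro a _
    exact Submodule.smul_mem _ _ (hWinv f hfW (a.1, 0))
  have hEρ : ∀ f' : F × F → ℂ, f' ∈ indSubspaceU2 q F ψt → ∀ a : F, a^q = a → ∀ t : Q,
      f' (σ t + a, 0 + 0 + σ t * a^q) = ψt a (a * w t) * f' (σ t, 0) := by
    intro f' hf' a ha t
    rw [hmemV] at hf'
    have key := hf' a ha (a * w t) (σ t, 0)
    have harg : ((a + σ t : F), (a * w t + 0 + a * (σ t)^q : F))
        = ((σ t + a : F), (0 + 0 + σ t * a^q : F)) := by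
      rw [ha]
      simp only [hwdef]
      rw [Prod.mk.injEq]
      exact ⟨by ring, by ring⟩
    rw [harg] at key
    exact key
  have hEh1 : ∀ t : Q, E h1 t = (∑ a : ↥K, ψ (a.1 * (w t - w t₀))) * f (σ t, 0) := by
    intro t
    show h1 (σ t, 0) = _
    rw [hh1, Finset.sum_apply]
    simp only [Pi.smul_apply, smul_eq_mul]
    rw [Finset.sum_congr rfl (fun a _ => ?_), ← Finset.sum_mul]
    have ha := (hKmem a.1).mp a.2
    show (ψt a.1 (a.1 * w t₀))⁻¹ * f (σ t + a.1, 0 + 0 + σ t * a.1^q)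
      = ψ (a.1 * (w t - w t₀)) * f (σ t, 0)
    rw [hEρ f hfV a.1 ha t]
    have hsplit : ψt a.1 (a.1 * w t) = ψt a.1 (a.1 * w t₀) * ψ (a.1 * (w t - w t₀)) := by
      rw [← r1 a.1 ha]
      congr 1
      ring
    rw [hsplit]
    have hX := r2 a.1 ha (a.1 * w t₀)
    field_simp
  have hEt₀ : E h1 t₀ = (q : ℂ) * f (σ t₀, 0) := by
    rw [hEh1 t₀]
    congr 1
    rw [Finset.sum_congr rfl (fun a _ => by rw [sub_self, mul_zero, AddChar.map_zero_eq_one])]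
    rw [Finset.sum_const, Finset.card_univ, hKc, nsmul_eq_mul, mul_one]
  have hEne : ∀ t : Q, t ≠ t₀ → E h1 t = 0 := by
    intro t ht
    rw [hEh1 t]
    have hu : (σ t - σ t₀)^q = (σ t)^q - (σ t₀)^q := hsubq _ _
    have hzw : w t - w t₀ = (σ t - σ t₀) - (σ t - σ t₀)^q := by
      simp only [hwdef]
      linear_combination hu
    have hz0 : w t - w t₀ ≠ 0 := by
      intro hcon
      apply ht
      rw [hzw, sub_eq_zero] at hcon
      have hmem : σ t - σ t₀ ∈ K := (hKmem _).mpr hcon.symm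
      have := hπeq _ _ hmem
      rw [hσ, hσ] at this
      exact this
    have hzq : (w t - w t₀)^q = -(w t - w t₀) := by
      rw [hzw, hsubq, hx2]
      ring
    rw [charSum _ hz0 hzq, zero_mul]
  have hsingle : E h1 = ((q : ℂ) * f (σ t₀, 0)) • (Pi.single t₀ 1 : Q → ℂ) := by
    funext t
    by_cases h : t = t₀
    · subst h
      rw [hEt₀, Pi.smul_apply, Pi.single_eq_same, smul_eq_mul, mul_one]
    · rw [hEne t h, Pi.smul_apply, Pi.single_eq_of_ne h, smul_zero]
  have hGsmul : ∀ (c : ℂ) (v : Q → ℂ), G (c • v) = c • G v := by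
    intro c v
    funext x
    show ψt _ _ * (c • v) (π x.1) = c • (ψt _ _ * v (π x.1))
    rw [Pi.smul_apply, smul_eq_mul, smul_eq_mul]
    ring
  have hqc0 : (q : ℂ) * f (σ t₀, 0) ≠ 0 :=
    mul_ne_zero (Nat.cast_ne_zero.mpr hq0) hc₀
  set e : Q → (F × F → ℂ) := fun t => G (Pi.single t 1) with hedef
  have het₀ : e t₀ ∈ W := by
    have hh1V : h1 ∈ indSubspaceU2 q F ψt := hWle hh1W
    have hkey : h1 = ((q : ℂ) * f (σ t₀, 0)) • e t₀ := by
      calc h1 = G (E h1) := (hGE h1 hh1V).symm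
        _ = G (((q : ℂ) * f (σ t₀, 0)) • (Pi.single t₀ 1 : Q → ℂ)) := by rw [← hsingle]
        _ = ((q : ℂ) * f (σ t₀, 0)) • e t₀ := by rw [hGsmul, hedef]
    rw [show e t₀ = ((q : ℂ) * f (σ t₀, 0))⁻¹ • h1 from by
      rw [hkey, smul_smul, inv_mul_cancel₀ hqc0, one_smul]]
    exact Submodule.smul_mem _ _ hh1W
  have heW : ∀ s : Q, e s ∈ W := by
    intro s
    set c := σ t₀ - σ s with hcdef
    have h2W : (fun x : F × F => e t₀ (x.1 + c, x.2 + 0 + x.1 * c^q)) ∈ W :=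
      hWinv _ het₀ (c, 0)
    set f2 : F × F → ℂ := fun x => e t₀ (x.1 + c, x.2 + 0 + x.1 * c^q) with hf2
    have hf2V : f2 ∈ indSubspaceU2 q F ψt := hWle h2W
    have hπc : ∀ u : Q, π (σ u + c) = u + t₀ - s := by
      intro u
      have e1 : π (σ u + c) = π (σ u) + π c := rfl
      have e2 : π c = π (σ t₀) - π (σ s) := by rw [hcdef]; rfl
      rw [e1, e2, hσ, hσ, hσ]
      abel
    have hval : ∀ u : Q, E f2 u
        = ψt (σ u + c - σ (π (σ u + c)))
            ((0 + 0 + σ u * c^q) - (σ u + c - σ (π (σ u + c))) * (σ (π (σ u + c)))^q)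
          * (Pi.single t₀ 1 : Q → ℂ) (u + t₀ - s) := by
      intro u
      show e t₀ (σ u + c, 0 + 0 + σ u * c^q) = _
      rw [hedef, hGdef]
      show ψt _ _ * ((Pi.single t₀ 1 : Q → ℂ)) (π (σ u + c)) = _
      rw [hπc u]
    have hEf2 : E f2 = (E f2 s) • (Pi.single s 1 : Q → ℂ) := by
      funext u
      by_cases h : u = s
      · subst h
        rw [Pi.smul_apply, Pi.single_eq_same, smul_eq_mul, mul_one]
      · rw [hval u]
        have hne : u + t₀ - s ≠ t₀ := by
          intro hh
          apply h
          have h2 : u = (u + t₀ - s) + s - t₀ := by abel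
          rw [hh] at h2
          rw [h2]
          abel
        rw [Pi.single_eq_of_ne hne, mul_zero, Pi.smul_apply, Pi.single_eq_of_ne h, smul_zero]
    have hν : E f2 s ≠ 0 := by
      rw [hval s]
      have hrw : s + t₀ - s = t₀ := by abel
      rw [hrw, Pi.single_eq_same, mul_one]
      exact r2 _ ((hKmem _).mp (hπmem (σ s + c))) _
    have hkey : f2 = (E f2 s) • e s := by
      calc f2 = G (E f2) := (hGE f2 hf2V).symm
        _ = G ((E f2 s) • (Pi.single s 1 : Q → ℂ)) := by rw [← hEf2]
        _ = (E f2 s) • e s := by rw [hGsmul, hedef]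
    rw [show e s = (E f2 s)⁻¹ • f2 from by
      nth_rewrite 2 [hkey]
      rw [smul_smul, inv_mul_cancel₀ hν, one_smul]]
    exact Submodule.smul_mem _ _ h2W
  apply le_antisymm hWle
  intro f3 hf3
  have hsum2 : ∀ u : Q, Pi.single u (E f3 u) = (E f3 u) • (Pi.single u 1 : Q → ℂ) := by
    intro u
    funext v
    by_cases h : v = u
    · subst h
      rw [Pi.single_eq_same, Pi.smul_apply, Pi.single_eq_same, smul_eq_mul, mul_one]
    · rw [Pi.single_eq_of_ne h, Pi.smul_apply, Pi.single_eq_of_ne h, smul_zero]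
  have hGsum : ∀ vv : Q → (Q → ℂ), G (∑ t : Q, vv t) = ∑ t : Q, G (vv t) := by
    intro vv
    funext x
    show ψt _ _ * (∑ t : Q, vv t) (π x.1) = (∑ t : Q, G (vv t)) x
    rw [Finset.sum_apply, Finset.mul_sum, Finset.sum_apply]
    exact Finset.sum_congr rfl (fun i _ => rfl)
  have hG3 : f3 = ∑ t : Q, (E f3 t) • e t := by
    have h1' : (E f3 : Q → ℂ) = ∑ t : Q, (E f3 t) • (Pi.single t 1 : Q → ℂ) := by
      conv_lhs => rw [← Finset.univ_sum_single (E f3)]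
      exact Finset.sum_congr rfl (fun t _ => hsum2 t)
    calc f3 = G (E f3) := (hGE f3 hf3).symm
      _ = G (∑ t : Q, (E f3 t) • (Pi.single t 1 : Q → ℂ)) := by rw [← h1']
      _ = ∑ t : Q, G ((E f3 t) • (Pi.single t 1 : Q → ℂ)) := hGsum _
      _ = ∑ t : Q, (E f3 t) • e t :=
          Finset.sum_congr rfl (fun t _ => by rw [hGsmul, hedef])
  rw [hG3]
  exact Submodule.sum_mem _ (fun t _ => Submodule.smul_mem _ _ (heW t))
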